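/- In a strictly convex two-dimensional normed space, if two distinct points p and q both lie on the unit sphere S(o,1) centered at the origin and also on the unit sphere S(x,1) centered at x ≠ o, then x = p + q. -/

import Mathlib

section Aux

variable {X : Type*} [NormedAddCommGroup X] [NormedSpace ℝ X] [StrictConvexSpace ℝ X]

/-- On the line through `p` with direction `x`, where `p` and `p - x` are unit vectors,
any point of the closed unit ball has parameter in `[-1, 0]`. -/
private lemma line_aux (p x : X) (hp : ‖p‖ = 1) (hpx : ‖p - x‖ = 1) (hx : x ≠ 0)
    (r : ℝ) (hr : ‖p + r • x‖ ≤ 1) : -1 ≤ r ∧ r ≤ 0 := by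
  constructor
  · by_contra h
    push_neg at h
    have hrn : r < -1 := h
    have hr0 : r ≠ 0 := by linarith
    have hne : p + r • x ≠ p := by
      intro hh
      have h2 : r • x = 0 := by
        have h3 : p + r • x = p + (0:ℝ) • x := by simpa using hh
        have := add_left_cancel h3
        simpa using this
      rcases smul_eq_zero.mp h2 with h3 | h3
      · exact hr0 h3
      · exact hx h3
    have ha : (0:ℝ) < -1/r := by
      apply div_pos_of_neg_of_neg <;> linarith
    have hb : (0:ℝ) < 1 - (-1/r) := by
      have : -1/r < 1 := by
        rw [div_lt_one_of_neg (by linarith : r < 0)]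
        linarith
      linarith
    have hcombo : (-1/r) • (p + r • x) + (1 - (-1/r)) • p = p - x := by
      match_scalars <;> first | (field_simp; ring) | field_simp | ring
    have := norm_combo_lt_of_ne hr hp.le hne ha hb (by ring)
    rw [hcombo] at this
    linarith [hpx.ge]
  · by_contra h
    push_neg at h
    have hne : p - x ≠ p + r • x := by
      intro hh
      have h3 : p + (-1:ℝ) • x = p + r • x := by simpa [sub_eq_add_neg] using hh
      have h4 : (-1:ℝ) • x = r • x := add_left_cancel h3
      have h5 : (r + 1) • x = 0 := by
        rw [add_smul, ← h4]
        simp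
      rcases smul_eq_zero.mp h5 with h6 | h6
      · linarith
      · exact hx h6
    have ha : (0:ℝ) < r / (r + 1) := by positivity
    have hb : (0:ℝ) < 1 / (r + 1) := by positivity
    have hab : r / (r + 1) + 1 / (r + 1) = 1 := by
      field_simp
    have hcombo : (r / (r + 1)) • (p - x) + (1 / (r + 1)) • (p + r • x) = p := by
      have : r + 1 ≠ 0 := by positivity
      match_scalars <;> first | (field_simp; ring) | field_simp | ring
    have := norm_combo_lt_of_ne hpx.le hr hne ha hb hab
    rw [hcombo] at this
    linarith [hp.ge]

/-- If `a ≠ b` are unit vectors and `‖b - 2a‖ = 1` then contradiction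
(the circles centered at `0` and `2a` are tangent at `a`). -/
private lemma half_aux (a b : X) (ha : ‖a‖ = 1) (hb : ‖b‖ = 1)
    (h : ‖b - (2:ℝ) • a‖ = 1) (hab : a ≠ b) : False := by
  have hne : b ≠ (2:ℝ) • a - b := by
    intro h'
    apply hab
    have h2 : (2:ℝ) • b = (2:ℝ) • a := by
      calc (2:ℝ) • b = b + b := two_smul ℝ b
        _ = b + ((2:ℝ) • a - b) := by rw [← h']
        _ = (2:ℝ) • a := by abel
    have := smul_right_injective X (by norm_num : (2:ℝ) ≠ 0) h2
    exact this.symm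
  have hn2 : ‖(2:ℝ) • a - b‖ ≤ 1 := by
    rw [← norm_neg]
    simp only [neg_sub]
    exact h.le
  have hcombo : (1/2 : ℝ) • b + (1/2 : ℝ) • ((2:ℝ) • a - b) = a := by
    match_scalars <;> ring
  have := norm_combo_lt_of_ne hb.le hn2 hne (by norm_num : (0:ℝ) < 1/2)
    (by norm_num : (0:ℝ) < 1/2) (by norm_num)
  rw [hcombo] at this
  linarith [ha.ge]

/-- Main contradiction: if `q = c • p + d • x` with `|c| > 1`,
then the four-sphere-point configuration is impossible. -/
private lemma main_aux (p q x : X) (hpq : p ≠ q) (hp : ‖p‖ = 1) (hq : ‖q‖ = 1)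
    (hpx : ‖p - x‖ = 1) (hqx : ‖q - x‖ = 1) (hx : x ≠ 0) (c d : ℝ)
    (hcd : q = c • p + d • x) (hc : 1 < |c|) : False := by
  have hc0 : c ≠ 0 := by
    intro h; rw [h] at hc; simp at hc; linarith
  have hx2q : x ≠ (2:ℝ) • q := by
    intro h
    apply half_aux q p hq hp ?_ hpq.symm
    rw [← h]; exact hpx
  set l := (c - 1) / (2 * c) with hl
  have hcc : c < -1 ∨ 1 < c := by
    rcases abs_cases c with ⟨h1, _⟩ | ⟨h1, _⟩
    · right; linarith
    · left; linarith
  have hl0 : 0 < l := by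
    rcases hcc with h | h
    · apply div_pos_of_neg_of_neg <;> linarith
    · apply div_pos <;> linarith
  have hl1 : l < 1 := by
    rcases hcc with h | h
    · rw [hl, div_lt_one_of_neg (by linarith : 2 * c < 0)]
      linarith
    · rw [hl, div_lt_one (by linarith : (0:ℝ) < 2 * c)]
      linarith
  set r1 := d / c + l with hr1
  have hu1 : l • (x - q) + (1 - l) • q = p + r1 • x := by
    rw [hcd]
    simp only [hr1, hl]
    match_scalars <;> field_simp <;> ring
  have hu2 : l • (-q) + (1 - l) • (q - x) = p + (r1 - 1) • x := by
    rw [hcd]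
    simp only [hr1, hl]
    match_scalars <;> field_simp <;> ring
  have hxq : ‖x - q‖ = 1 := by rw [norm_sub_rev]; exact hqx
  have hne1 : x - q ≠ q := by
    intro h
    apply hx2q
    have h2 : x = q + q := by linear_combination (norm := module) h
    rw [h2]
    exact (two_smul ℝ q).symm
  have hne2 : -q ≠ q - x := by
    intro h
    apply hx2q
    have h2 : x = q + q := by linear_combination (norm := module) h
    rw [h2]
    exact (two_smul ℝ q).symm
  have hn1 : ‖p + r1 • x‖ < 1 := by
    rw [← hu1]
    exact norm_combo_lt_of_ne hxq.le hq.le hne1 hl0 (by linarith) (by ring)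
  have hn2 : ‖p + (r1 - 1) • x‖ < 1 := by
    rw [← hu2]
    have hnq : ‖-q‖ ≤ 1 := by rw [norm_neg]; exact hq.le
    exact norm_combo_lt_of_ne hnq hqx.le hne2 hl0 (by linarith) (by ring)
  obtain ⟨ha1, ha2⟩ := line_aux p x hp hpx hx r1 hn1.le
  obtain ⟨hb1, hb2⟩ := line_aux p x hp hpx hx (r1 - 1) hn2.le
  have hr10 : r1 = 0 := le_antisymm ha2 (by linarith)
  rw [hr10] at hn1
  simp at hn1
  linarith [hp.ge]

end Aux

/-- In a strictly convex two-dimensional normed space, if distinct points `p, q`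
lie on the unit sphere about `0` and on the unit sphere about `x ≠ 0`,
then `x = p + q`. -/
theorem center_eq_add_of_two_unit_circles {X : Type*} [NormedAddCommGroup X]
    [NormedSpace ℝ X] [StrictConvexSpace ℝ X] (hdim : Module.finrank ℝ X = 2)
    (p q x : X) (hpq : p ≠ q) (hp : ‖p‖ = 1) (hq : ‖q‖ = 1)
    (hpx : ‖p - x‖ = 1) (hqx : ‖q - x‖ = 1) (hx : x ≠ 0) :
    x = p + q := by
  have hp0 : p ≠ 0 := by intro h; rw [h] at hp; simp at hp
  by_cases hdep : ∃ t : ℝ, t • p = x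
  · obtain ⟨t, ht⟩ := hdep
    have h1 : ‖p - x‖ = |1 - t| := by
      rw [← ht, show p - t • p = (1 - t) • p by rw [sub_smul, one_smul],
        norm_smul, hp, Real.norm_eq_abs, mul_one]
    have ht0 : t ≠ 0 := by
      intro h; rw [h] at ht; simp at ht; exact hx ht.symm
    have ht2 : t = 2 := by
      rw [hpx] at h1
      rcases abs_cases (1 - t) with ⟨h2, _⟩ | ⟨h2, _⟩
      · have h3 : (1:ℝ) - t = 1 := by rw [← h2, ← h1]
        exact absurd (by linarith) ht0
      · have h3 : -((1:ℝ) - t) = 1 := by rw [← h2, ← h1]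
        linarith
    exfalso
    apply half_aux p q hp hq ?_ hpq
    have h2 : x = (2:ℝ) • p := by rw [← ht, ht2]
    rw [← h2]
    exact hqx
  · have hli : LinearIndependent ℝ ![p, x] :=
      (LinearIndependent.pair_iff' hp0).2 (fun a ha => hdep ⟨a, ha⟩)
    have hcard : Fintype.card (Fin 2) = Module.finrank ℝ X := by simp [hdim]
    have hsp : Submodule.span ℝ (Set.range ![p, x]) = ⊤ :=
      hli.span_eq_top_of_card_eq_finrank hcard
    have hrange : Set.range ![p, x] = {p, x} := by
      ext y
      simp only [Set.mem_range, Fin.exists_fin_two, Matrix.cons_val_zero,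
        Matrix.cons_val_one, Matrix.head_cons, Set.mem_insert_iff,
        Set.mem_singleton_iff]
      constructor
      · rintro (h | h)
        · exact Or.inl h.symm
        · exact Or.inr h.symm
      · rintro (h | h)
        · exact Or.inl h.symm
        · exact Or.inr h.symm
    have hqmem : q ∈ Submodule.span ℝ ({p, x} : Set X) := by
      rw [← hrange, hsp]; trivial
    obtain ⟨c, d, hcd⟩ := Submodule.mem_span_pair.mp hqmem
    have hcd' : q = c • p + d • x := hcd.symm
    by_cases hcbig : 1 < |c|
    · exact absurd (main_aux p q x hpq hp hq hpx hqx hx c d hcd' hcbig) id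
    · by_cases hc0 : c = 0
      · -- q = d • x, forces x = 2q, contradiction
        exfalso
        rw [hc0, zero_smul, zero_add] at hcd'
        have hx0 : ‖x‖ ≠ 0 := by simpa using hx
        have h1 : |d| * ‖x‖ = 1 := by
          rw [← hq, hcd', norm_smul, Real.norm_eq_abs]
        have h2 : |d - 1| * ‖x‖ = 1 := by
          have h' : q - x = (d - 1) • x := by rw [hcd']; match_scalars <;> ring
          calc |d - 1| * ‖x‖ = ‖(d - 1) • x‖ := by rw [norm_smul, Real.norm_eq_abs]
            _ = ‖q - x‖ := by rw [h']
            _ = 1 := hqx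
        have h3 : |d| = |d - 1| := mul_right_cancel₀ hx0 (h1.trans h2.symm)
        have hd : d = 1/2 := by
          rcases abs_cases d with ⟨h4, _⟩ | ⟨h4, _⟩ <;> rcases abs_cases (d - 1) with ⟨h5, _⟩ | ⟨h5, _⟩ <;>
            rw [h4, h5] at h3 <;> linarith
        apply half_aux q p hq hp ?_ hpq.symm
        rw [← hpx]
        congr 1
        rw [hcd', hd]
        match_scalars <;> norm_num
      · by_cases hcone : c = 1
        · exfalso
          rw [hcone, one_smul] at hcd'
          have e1 : ‖p + d • x‖ ≤ 1 := by rw [← hcd']; exact hq.le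
          have e2 : ‖p + (d - 1) • x‖ ≤ 1 := by
            rw [show p + (d - 1) • x = (p + d • x) - x by rw [sub_smul, one_smul]; abel,
              ← hcd']
            exact hqx.le
          obtain ⟨f1, f2⟩ := line_aux p x hp hpx hx d e1
          obtain ⟨f3, f4⟩ := line_aux p x hp hpx hx (d - 1) e2
          have : d = 0 := by linarith
          rw [this] at hcd'
          simp at hcd'
          exact hpq hcd'.symm
        · by_cases hcnegone : c = -1
          · rw [hcnegone] at hcd'
            have e1 : ‖p + (-d) • x‖ ≤ 1 := by
              rw [show p + (-d) • x = -q by rw [hcd']; match_scalars <;> ring, norm_neg]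
              exact hq.le
            have e2 : ‖p + (1 - d) • x‖ ≤ 1 := by
              rw [show p + (1 - d) • x = x - q by rw [hcd']; match_scalars <;> ring,
                norm_sub_rev]
              exact hqx.le
            obtain ⟨f1, f2⟩ := line_aux p x hp hpx hx (-d) e1
            obtain ⟨f3, f4⟩ := line_aux p x hp hpx hx (1 - d) e2
            have hd1 : d = 1 := by linarith
            rw [hd1] at hcd'
            rw [hcd']
            match_scalars <;> ring
          · -- 0 < |c| < 1 : swap roles of p and q
            exfalso
            have habs : |c| < 1 := by
              rcases lt_or_eq_of_le (not_lt.mp hcbig) with h | h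
              · exact h
              · exfalso
                rcases abs_eq (by norm_num : (0:ℝ) ≤ 1) |>.mp h with h1 | h1
                · exact hcone h1
                · exact hcnegone h1
            have hswap : p = (1/c) • q + (-d/c) • x := by
              rw [hcd']
              match_scalars <;> field_simp <;> ring
            have hbig : 1 < |1/c| := by
              rw [abs_div, abs_one]
              rw [one_div, lt_inv_comm₀] <;>
                [skip; norm_num; positivity]
              · simpa using habs
            exact main_aux q p x hpq.symm hq hp hqx hpx hx (1/c) (-d/c) hswap hbig
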